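/- (Hofmann–Mislove theorem) Let X be a sober space and U ⊆ O(X) a Scott-open filter of open sets (i.e. a filter in the inclusion-ordered lattice of opens that is inaccessible by directed unions). If ⋂U ⊆ V for some open V, then V ∈ U. -/
import Mathlib


def ScottOpen {X : Type*} [Preorder X] (U : Set X) : Prop :=
  (∀ ⦃x y : X⦄, x ≤ y → x ∈ U → y ∈ U) ∧
  ∀ D : Set X, D.Nonempty → DirectedOn (· ≤ ·) D →
    ∀ a : X, IsLUB D a → a ∈ U → (D ∩ U).Nonempty

def IsDcpo (X : Type*) [Preorder X] : Prop :=
  ∀ D : Set X, D.Nonempty → DirectedOn (· ≤ ·) D → ∃ a : X, IsLUB D a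

def IsFiniteElt {X : Type*} [Preorder X] (d : X) : Prop :=
  ∀ D : Set X, D.Nonempty → DirectedOn (· ≤ ·) D →
    ∀ a : X, IsLUB D a → d ≤ a → ∃ e ∈ D, d ≤ e

def IsAlgebraicDcpo (X : Type*) [Preorder X] : Prop :=
  ∀ x : X, DirectedOn (· ≤ ·) {d : X | IsFiniteElt d ∧ d ≤ x} ∧
    IsLUB {d : X | IsFiniteElt d ∧ d ≤ x} x

def BoundedComplete (X : Type*) [Preorder X] : Prop :=
  ∀ a b : X, (∃ c : X, a ≤ c ∧ b ≤ c) → ∃ s : X, IsLUB {a, b} s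

def scottTop (X : Type*) [Preorder X] : TopologicalSpace X where
  IsOpen := ScottOpen
  isOpen_univ := ⟨fun _ _ _ h => h, fun D hD _ _ _ _ => by
    obtain ⟨d, hd⟩ := hD; exact ⟨d, hd, trivial⟩⟩
  isOpen_inter := fun U V hU hV => by
    constructor
    · intro x y hxy hx; exact ⟨hU.1 hxy hx.1, hV.1 hxy hx.2⟩
    · intro D hne hdir a ha haUV
      obtain ⟨u, huD, huU⟩ := hU.2 D hne hdir a ha haUV.1
      obtain ⟨v, hvD, hvV⟩ := hV.2 D hne hdir a ha haUV.2
      obtain ⟨w, hwD, huw, hvw⟩ := hdir u huD v hvD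
      exact ⟨w, hwD, hU.1 huw huU, hV.1 hvw hvV⟩
  isOpen_sUnion := fun S hS => by
    constructor
    · intro x y hxy hx
      obtain ⟨U, hUS, hxU⟩ := hx
      exact ⟨U, hUS, (hS U hUS).1 hxy hxU⟩
    · intro D hne hdir a ha haS
      obtain ⟨U, hUS, haU⟩ := haS
      obtain ⟨d, hdD, hdU⟩ := (hS U hUS).2 D hne hdir a ha haU
      exact ⟨d, hdD, U, hUS, hdU⟩

def ScottSaturated {X : Type*} [Preorder X] (S : Set X) : Prop :=
  S = ⋂₀ {U : Set X | ScottOpen U ∧ S ⊆ U}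

def Saturated {X : Type*} [TopologicalSpace X] (S : Set X) : Prop :=
  S = ⋂₀ {U : Set X | IsOpen U ∧ S ⊆ U}

def ScottCont' {X Y : Type*} [Preorder X] [Preorder Y] (f : X → Y) : Prop :=
  Monotone f ∧ ∀ D : Set X, D.Nonempty → DirectedOn (· ≤ ·) D →
    ∀ a : X, IsLUB D a → IsLUB (f '' D) (f a)

def ContMap (X Y : Type*) [Preorder X] [Preorder Y] := {f : X → Y // ScottCont' f}

instance {X Y : Type*} [Preorder X] [Preorder Y] : Preorder (ContMap X Y) :=
  Preorder.lift Subtype.val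

open Classical in
noncomputable def stepFun {X Y : Type*} [Preorder X] [Preorder Y] [OrderBot Y]
    (d : X) (e : Y) : X → Y :=
  fun x => if d ≤ x then e else ⊥

/-- Hofmann–Mislove: in a sober space, a Scott-open filter of open
sets contains every open containing its intersection. -/
theorem hofmann_mislove {X : Type*} [TopologicalSpace X]
    (hsober : ∀ C : Set X, IsClosed C → C.Nonempty →
      (∀ F G : Set X, IsClosed F → IsClosed G → C ⊆ F ∪ G → C ⊆ F ∨ C ⊆ G) →
      ∃! x : X, C = closure {x})
    (𝒰 : Set (Set X)) (hopen : ∀ u ∈ 𝒰, IsOpen u) (hne : 𝒰.Nonempty)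
    (hup : ∀ u ∈ 𝒰, ∀ v : Set X, IsOpen v → u ⊆ v → v ∈ 𝒰)
    (hinter : ∀ u ∈ 𝒰, ∀ v ∈ 𝒰, u ∩ v ∈ 𝒰)
    (hscott : ∀ D : Set (Set X), (∀ d ∈ D, IsOpen d) → D.Nonempty →
      DirectedOn (· ⊆ ·) D → ⋃₀ D ∈ 𝒰 → ∃ d ∈ D, d ∈ 𝒰)
    (V : Set X) (hV : IsOpen V) (hsub : ⋂₀ 𝒰 ⊆ V) :
    V ∈ 𝒰 := by
  by_contra hVnot
  have huniv : (Set.univ : Set X) ∈ 𝒰 := by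
    obtain ⟨u, hu⟩ := hne
    exact hup u hu _ isOpen_univ (Set.subset_univ u)
  set S : Set (Set X) := {W | (IsOpen W ∧ V ⊆ W) ∧ W ∉ 𝒰} with hSdef
  have hVS : V ∈ S := ⟨⟨hV, subset_rfl⟩, hVnot⟩
  obtain ⟨W, _, hWS, hWmax⟩ := zorn_subset_nonempty S (fun c hc hchain hcne => by
    refine ⟨⋃₀ c, ⟨⟨isOpen_sUnion fun t ht => (hc ht).1.1, ?_⟩, ?_⟩,
      fun s hs => Set.subset_sUnion_of_mem hs⟩
    · obtain ⟨t, ht⟩ := hcne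
      exact (hc ht).1.2.trans (Set.subset_sUnion_of_mem ht)
    · intro hmem
      obtain ⟨d, hd, hdU⟩ := hscott c (fun d hd => (hc hd).1.1) hcne
        hchain.directedOn hmem
      exact (hc hd).2 hdU) V hVS
  have hWopen : IsOpen W := hWS.1.1
  have hVW : V ⊆ W := hWS.1.2
  have hWnot : W ∉ 𝒰 := hWS.2
  -- every member of 𝒰 meets Wᶜ
  have hmeets : ∀ u ∈ 𝒰, (u ∩ Wᶜ).Nonempty := by
    intro u hu
    by_contra h
    have : u ⊆ W := by
      intro x hx
      by_contra hxW
      exact h ⟨x, hx, hxW⟩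
    exact hWnot (hup u hu W hWopen this)
  have hCne : (Wᶜ : Set X).Nonempty := by
    obtain ⟨x, _, hx⟩ := hmeets Set.univ huniv
    exact ⟨x, hx⟩
  have hirr : ∀ F G : Set X, IsClosed F → IsClosed G → (Wᶜ : Set X) ⊆ F ∪ G →
      (Wᶜ : Set X) ⊆ F ∨ (Wᶜ : Set X) ⊆ G := by
    intro F G hF hG hsubFG
    by_contra h
    push_neg at h
    obtain ⟨hnF, hnG⟩ := h
    have hFU : W ∪ Fᶜ ∈ 𝒰 := by
      by_contra hmem
      have : W ∪ Fᶜ ∈ S := ⟨⟨hWopen.union hF.isOpen_compl,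
        hVW.trans Set.subset_union_left⟩, hmem⟩
      have := hWmax this Set.subset_union_left
      have : Fᶜ ⊆ W := Set.union_subset_iff.mp this |>.2
      exact hnF fun x hx => by
        by_contra hxF
        exact hx (this hxF)
    have hGU : W ∪ Gᶜ ∈ 𝒰 := by
      by_contra hmem
      have : W ∪ Gᶜ ∈ S := ⟨⟨hWopen.union hG.isOpen_compl,
        hVW.trans Set.subset_union_left⟩, hmem⟩
      have := hWmax this Set.subset_union_left
      have : Gᶜ ⊆ W := Set.union_subset_iff.mp this |>.2
      exact hnG fun x hx => by
        by_contra hxG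
        exact hx (this hxG)
    have hinterU := hinter _ hFU _ hGU
    have hsubW : (W ∪ Fᶜ) ∩ (W ∪ Gᶜ) ⊆ W := by
      rintro x ⟨hx1, hx2⟩
      rcases hx1 with h1 | h1
      · exact h1
      rcases hx2 with h2 | h2
      · exact h2
      by_contra hxW
      rcases hsubFG hxW with hxF | hxG
      · exact h1 hxF
      · exact h2 hxG
    exact hWnot (hup _ hinterU W hWopen hsubW)
  obtain ⟨x, hx, _⟩ := hsober Wᶜ hWopen.isClosed_compl hCne hirr
  have hxC : x ∈ (Wᶜ : Set X) := hx ▸ subset_closure rfl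
  have hxU : x ∈ ⋂₀ 𝒰 := by
    intro u hu
    obtain ⟨y, hyu, hyC⟩ := hmeets u hu
    have : y ∈ closure {x} := hx ▸ hyC
    obtain ⟨z, hzu, hzx⟩ := mem_closure_iff.mp this u (hopen u hu) hyu
    rwa [Set.mem_singleton_iff.mp hzx] at hzu
  exact hxC (hVW (hsub hxU))
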